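/- (Abstract unitary extension lemma, Lemma 2.2.) Let G be a group acting on a set M, let 𝔥 be a complex Hilbert space, and let H be a finite-dimensional complex inner product space. Suppose K : M × H → 𝔥 is a map whose range has dense linear span in 𝔥, and J : G × M → GL(H) (invertible linear maps on H) satisfies the cocycle identity J(g₁g₂, z) = J(g₁, g₂·z) ∘ J(g₂, z) for all g₁,g₂ ∈ G, z ∈ M. If for all g ∈ G, z₁,z₂ ∈ M, v₁,v₂ ∈ H the inner products satisfy ⟨K(g·z₁, v₁), K(g·z₂, v₂)⟩ = ⟨K(z₁, J(g,z₁)* v₁), K(z₂, J(g,z₂)* v₂)⟩, then there exists a group homomorphism V from G into the group of unitary operators on 𝔥 such that V(g)(K(z,v)) = K(g·z, (J(g,z)⁻¹)* v) for all g ∈ G, z ∈ M, v ∈ H. -/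

import Mathlib

open scoped InnerProductSpace

noncomputable section

private theorem ext_dense_aux {𝔥 ι : Type*} [NormedAddCommGroup 𝔥] [InnerProductSpace ℂ 𝔥]
    (K : ι → 𝔥) (hdense : Dense (↑(Submodule.span ℂ (Set.range K)) : Set 𝔥))
    (T₁ T₂ : 𝔥 →L[ℂ] 𝔥) (h : ∀ i, T₁ (K i) = T₂ (K i)) (x : 𝔥) : T₁ x = T₂ x := by
  have h1 : Set.EqOn T₁ T₂ (Set.range K) := by rintro _ ⟨i, rfl⟩; exact h i
  have h2 : Set.EqOn (T₁ : 𝔥 → 𝔥) T₂ (↑(Submodule.span ℂ (Set.range K)) : Set 𝔥) :=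
    fun y hy => LinearMap.eqOn_span h1 hy
  have h3 : (T₁ : 𝔥 → 𝔥) = T₂ := Continuous.ext_on hdense T₁.continuous T₂.continuous h2
  exact congrFun h3 x

private theorem exists_isometry_aux {𝔥 ι : Type*} [NormedAddCommGroup 𝔥]
    [InnerProductSpace ℂ 𝔥] [CompleteSpace 𝔥] (K F : ι → 𝔥)
    (hdense : Dense (↑(Submodule.span ℂ (Set.range K)) : Set 𝔥))
    (h : ∀ p q : ι, ⟪F p, F q⟫_ℂ = ⟪K p, K q⟫_ℂ) :
    ∃ T : 𝔥 →ₗᵢ[ℂ] 𝔥, ∀ p, T (K p) = F p := by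
  classical
  set L : (ι →₀ ℂ) →ₗ[ℂ] 𝔥 := Finsupp.linearCombination ℂ K with hL
  set L' : (ι →₀ ℂ) →ₗ[ℂ] 𝔥 := Finsupp.linearCombination ℂ F with hL'
  have key : ∀ x y : ι →₀ ℂ, ⟪L' x, L' y⟫_ℂ = ⟪L x, L y⟫_ℂ := by
    intro x y
    simp only [hL, hL', Finsupp.linearCombination_apply, Finsupp.sum, sum_inner, inner_sum,
      inner_smul_left, inner_smul_right, h]
  have hker : LinearMap.ker L ≤ LinearMap.ker L' := by
    intro x hx
    have hx0 : L x = 0 := hx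
    have h0 : ⟪L' x, L' x⟫_ℂ = 0 := by rw [key, hx0, inner_zero_right]
    simpa [LinearMap.mem_ker] using inner_self_eq_zero.mp h0
  set N : Submodule ℂ 𝔥 := LinearMap.range L with hN
  have hrange : N = Submodule.span ℂ (Set.range K) := by
    rw [hN, hL]; exact Finsupp.range_linearCombination (R := ℂ) (v := K)
  have hNdense : Dense (N : Set 𝔥) := by rw [hrange]; exact hdense
  set ψ : ((ι →₀ ℂ) ⧸ LinearMap.ker L) →ₗ[ℂ] 𝔥 := Submodule.liftQ (LinearMap.ker L) L' hker
    with hψ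
  set e : ((ι →₀ ℂ) ⧸ LinearMap.ker L) ≃ₗ[ℂ] N := L.quotKerEquivRange with he
  set φ : N →ₗ[ℂ] 𝔥 := ψ ∘ₗ (e.symm : N →ₗ[ℂ] ((ι →₀ ℂ) ⧸ LinearMap.ker L)) with hφdef
  have hφ : ∀ x : ι →₀ ℂ, φ ⟨L x, LinearMap.mem_range_self L x⟩ = L' x := by
    intro x
    have h1 : (⟨L x, LinearMap.mem_range_self L x⟩ : N) = e (Submodule.Quotient.mk x) :=
      Subtype.ext (L.quotKerEquivRange_apply_mk x).symm
    rw [hφdef, LinearMap.comp_apply, h1]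
    simp [hψ]
  have hnorm : ∀ u : N, ‖φ u‖ = ‖(u : 𝔥)‖ := by
    intro u
    obtain ⟨x, hx⟩ := u.2
    have hu : u = ⟨L x, LinearMap.mem_range_self L x⟩ := Subtype.ext hx.symm
    rw [hu, hφ x]
    have h2 : ⟪L' x, L' x⟫_ℂ = ⟪L x, L x⟫_ℂ := key x x
    rw [@norm_eq_sqrt_re_inner ℂ, @norm_eq_sqrt_re_inner ℂ, h2]
  set η : N →ₗᵢ[ℂ] 𝔥 := ⟨φ, hnorm⟩ with hη
  have hd : DenseRange N.subtypeL := by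
    have : Set.range N.subtypeL = (N : Set 𝔥) := Subtype.range_coe
    rw [DenseRange, this]; exact hNdense
  have hui : IsUniformInducing (N.subtypeL : N →L[ℂ] 𝔥) := isometry_subtype_coe.isUniformInducing
  set T0 : 𝔥 →L[ℂ] 𝔥 := η.toContinuousLinearMap.extend N.subtypeL with hT0
  have heq : ∀ u : N, T0 u = η u := fun u =>
    ContinuousLinearMap.extend_eq η.toContinuousLinearMap (e := N.subtypeL) hd hui u
  have hiso : ∀ x : 𝔥, ‖T0 x‖ = ‖x‖ := by
    have hcont1 : Continuous fun x : 𝔥 => ‖T0 x‖ := T0.continuous.norm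
    have hcont2 : Continuous fun x : 𝔥 => ‖x‖ := continuous_norm
    have hEq : Set.EqOn (fun x : 𝔥 => ‖T0 x‖) (fun x : 𝔥 => ‖x‖) (N : Set 𝔥) := by
      intro x hx
      have := heq ⟨x, hx⟩
      simp only [this]
      exact (hnorm ⟨x, hx⟩).trans rfl
    have := Continuous.ext_on hNdense hcont1 hcont2 hEq
    exact fun x => congrFun this x
  refine ⟨⟨T0.toLinearMap, hiso⟩, ?_⟩
  intro p
  have hmem : K p ∈ N := by
    rw [hrange]; exact Submodule.subset_span ⟨p, rfl⟩
  have h1 : (⟨K p, hmem⟩ : N) = ⟨L (Finsupp.single p 1), LinearMap.mem_range_self _ _⟩ := by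
    apply Subtype.ext
    simp [hL]
  have h2 : T0 (K p) = φ ⟨K p, hmem⟩ := heq ⟨K p, hmem⟩
  show T0 (K p) = F p
  rw [h2, h1, hφ]
  simp [hL']

theorem unitary_extension_lemma
    {G M 𝔥 H : Type*} [Group G] [MulAction G M]
    [NormedAddCommGroup 𝔥] [InnerProductSpace ℂ 𝔥] [CompleteSpace 𝔥]
    [NormedAddCommGroup H] [InnerProductSpace ℂ H] [FiniteDimensional ℂ H]
    (K : M → H → 𝔥)
    (hdense : Dense
      (↑(Submodule.span ℂ (Set.range fun zv : M × H => K zv.1 zv.2)) : Set 𝔥))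
    (J : G → M → (H ≃L[ℂ] H))
    (hcocycle : ∀ g₁ g₂ : G, ∀ z : M,
      (J (g₁ * g₂) z : H →L[ℂ] H)
        = (J g₁ (g₂ • z) : H →L[ℂ] H) ∘L (J g₂ z : H →L[ℂ] H))
    (hinner : ∀ g : G, ∀ z₁ z₂ : M, ∀ v₁ v₂ : H,
      ⟪K (g • z₁) v₁, K (g • z₂) v₂⟫_ℂ
        = ⟪K z₁ (ContinuousLinearMap.adjoint (J g z₁ : H →L[ℂ] H) v₁),
            K z₂ (ContinuousLinearMap.adjoint (J g z₂ : H →L[ℂ] H) v₂)⟫_ℂ) :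
    ∃ V : G →* (𝔥 ≃ₗᵢ[ℂ] 𝔥), ∀ (g : G) (z : M) (v : H),
      V g (K z v)
        = K (g • z)
            (ContinuousLinearMap.adjoint ((J g z).symm : H →L[ℂ] H) v) := by
  classical
  set Kp : M × H → 𝔥 := fun zv => K zv.1 zv.2 with hKp
  -- adjoint of J cancels adjoint of J.symm
  have hadj : ∀ (e : H ≃L[ℂ] H) (v : H),
      ContinuousLinearMap.adjoint (e : H →L[ℂ] H)
        (ContinuousLinearMap.adjoint (e.symm : H →L[ℂ] H) v) = v := by
    intro e v
    rw [← ContinuousLinearMap.comp_apply, ← ContinuousLinearMap.adjoint_comp]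
    have hid : ((e.symm : H →L[ℂ] H) ∘L (e : H →L[ℂ] H)) = ContinuousLinearMap.id ℂ H := by
      ext w; simp
    rw [hid, ContinuousLinearMap.adjoint_id, ContinuousLinearMap.id_apply]
  have hex : ∀ g : G, ∃ T : 𝔥 →ₗᵢ[ℂ] 𝔥, ∀ p : M × H,
      T (Kp p) = K (g • p.1)
        (ContinuousLinearMap.adjoint ((J g p.1).symm : H →L[ℂ] H) p.2) := by
    intro g
    apply exists_isometry_aux Kp _ hdense
    intro p q
    have h := hinner g p.1 q.1
      (ContinuousLinearMap.adjoint ((J g p.1).symm : H →L[ℂ] H) p.2)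
      (ContinuousLinearMap.adjoint ((J g q.1).symm : H →L[ℂ] H) q.2)
    rw [hadj, hadj] at h
    exact h
  choose T hT using hex
  -- cocycle for the inverses
  have hsymm : ∀ (g₁ g₂ : G) (z : M),
      (((J (g₁ * g₂) z).symm : H →L[ℂ] H))
        = ((J g₂ z).symm : H →L[ℂ] H) ∘L ((J g₁ (g₂ • z)).symm : H →L[ℂ] H) := by
    intro g₁ g₂ z
    have hc : ∀ w : H, (J (g₁ * g₂) z) w = J g₁ (g₂ • z) (J g₂ z w) := by
      intro w
      have := congrArg (fun f : H →L[ℂ] H => f w) (hcocycle g₁ g₂ z)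
      simpa using this
    ext v
    simp only [ContinuousLinearMap.comp_apply, ContinuousLinearEquiv.coe_coe]
    rw [ContinuousLinearEquiv.symm_apply_eq, hc]
    simp
  -- J at identity is the identity
  have hJ1 : ∀ (z : M) (w : H), (J (1 : G) z) w = w := by
    intro z w
    have h := hcocycle 1 1 z
    rw [mul_one, one_smul] at h
    have h2 : (J (1 : G) z) w = (J (1 : G) z) ((J (1 : G) z) w) := by
      have := congrArg (fun f : H →L[ℂ] H => f w) h
      simpa using this
    exact ((J (1 : G) z).injective h2).symm
  have hJ1symm : ∀ z : M, (((J (1 : G) z).symm : H →L[ℂ] H)) = ContinuousLinearMap.id ℂ H := by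
    intro z
    ext w
    have : (J (1 : G) z).symm ((J (1 : G) z) w) = (J (1 : G) z).symm w := by rw [hJ1]
    simpa using this.symm
  -- T 1 = id
  have hT1 : ∀ x : 𝔥, T 1 x = x := by
    intro x
    have := ext_dense_aux Kp hdense (T 1).toContinuousLinearMap (ContinuousLinearMap.id ℂ 𝔥)
      (fun p => by
        show T 1 (Kp p) = Kp p
        rw [hT 1 p, hJ1symm, ContinuousLinearMap.adjoint_id, one_smul]
        rfl) x
    simpa using this
  -- composition law
  have hcomp : ∀ (g₁ g₂ : G) (x : 𝔥), T g₁ (T g₂ x) = T (g₁ * g₂) x := by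
    intro g₁ g₂ x
    have := ext_dense_aux Kp hdense
      ((T g₁).toContinuousLinearMap.comp (T g₂).toContinuousLinearMap)
      (T (g₁ * g₂)).toContinuousLinearMap
      (fun p => by
        show T g₁ (T g₂ (Kp p)) = T (g₁ * g₂) (Kp p)
        rw [hT g₂ p]
        have h1 : K (g₂ • p.1) (ContinuousLinearMap.adjoint ((J g₂ p.1).symm : H →L[ℂ] H) p.2)
            = Kp (g₂ • p.1, ContinuousLinearMap.adjoint ((J g₂ p.1).symm : H →L[ℂ] H) p.2) := rfl
        rw [h1, hT g₁ _, hT (g₁ * g₂) p]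
        have h2 : ContinuousLinearMap.adjoint (((J (g₁ * g₂) p.1).symm : H →L[ℂ] H))
            = (ContinuousLinearMap.adjoint ((J g₁ (g₂ • p.1)).symm : H →L[ℂ] H)) ∘L
              (ContinuousLinearMap.adjoint ((J g₂ p.1).symm : H →L[ℂ] H)) := by
          rw [hsymm g₁ g₂ p.1, ContinuousLinearMap.adjoint_comp]
        rw [h2]
        simp only [ContinuousLinearMap.comp_apply]
        congr 1
        exact (mul_smul g₁ g₂ p.1).symm) x
    simpa using this
  have hsurj : ∀ g : G, Function.Surjective (T g) := by
    intro g y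
    exact ⟨T g⁻¹ y, by rw [hcomp g g⁻¹ y, mul_inv_cancel, hT1]⟩
  refine ⟨{
      toFun := fun g => LinearIsometryEquiv.ofSurjective (T g) (hsurj g)
      map_one' := by
        ext x
        rw [LinearIsometryEquiv.coe_ofSurjective]
        simpa using hT1 x
      map_mul' := by
        intro g₁ g₂
        ext x
        rw [LinearIsometryEquiv.coe_mul, Function.comp_apply,
          LinearIsometryEquiv.coe_ofSurjective, LinearIsometryEquiv.coe_ofSurjective,
          LinearIsometryEquiv.coe_ofSurjective]
        exact (hcomp g₁ g₂ x).symm }, ?_⟩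
  intro g z v
  show LinearIsometryEquiv.ofSurjective (T g) (hsurj g) (K z v) = _
  rw [LinearIsometryEquiv.coe_ofSurjective]
  exact hT g (z, v)
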